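/- Let m, c, n₀, γ > 0. Then for each i ∈ {1,2,3}, c ∫_{ℝ³} p_i² J(p) dp = n₀ m² c³ K₃(γ) / (γ K₂(γ)). -/

import Mathlib

noncomputable section

open MeasureTheory

/-- Euclidean inner product on ℝ³. -/
def dot3 (p q : Fin 3 → ℝ) : ℝ := ∑ i, p i * q i

/-- The relativistic energy `p⁰ = √(m²c² + |p|²)`. -/
noncomputable def pZero (m c : ℝ) (p : Fin 3 → ℝ) : ℝ :=
  Real.sqrt (m ^ 2 * c ^ 2 + dot3 p p)

/-- Modified Bessel function of the second kind (integral formula). -/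
noncomputable def Kbessel (j : ℕ) (γ : ℝ) : ℝ :=
  (2 ^ j * (Nat.factorial j : ℝ) / (Nat.factorial (2 * j) : ℝ)) * γ ^ (-(j : ℤ)) *
    ∫ l in Set.Ioi γ, Real.exp (-l) * (l ^ 2 - γ ^ 2) ^ ((j : ℝ) - 1 / 2)

/-- The rest-frame relativistic Maxwellian (Jüttner distribution)
`J(p) = [n₀γ/(4πm³c³K₂(γ))] exp(−γp⁰/(mc))`. -/
noncomputable def Juttner (m c n₀ γ : ℝ) (p : Fin 3 → ℝ) : ℝ :=
  n₀ * γ / (4 * Real.pi * m ^ 3 * c ^ 3 * Kbessel 2 γ) *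
    Real.exp (-(γ * pZero m c p) / (m * c))


open Set Real


lemma aux_cont (γ q : ℝ) (hq : 0 ≤ q) :
    Continuous (fun l : ℝ => l ^ 2 - γ ^ 2) ∧
    Continuous (fun l : ℝ => (l ^ 2 - γ ^ 2) ^ q) := by
  have h1 : Continuous (fun l : ℝ => l ^ 2 - γ ^ 2) := by continuity
  exact ⟨h1, h1.rpow_const (fun x => Or.inr hq)⟩

lemma aux_int (γ : ℝ) (hγ : 0 < γ) (k : ℕ) (q : ℝ) (hq : 0 ≤ q) :
    IntegrableOn (fun l : ℝ => l ^ k * (l ^ 2 - γ ^ 2) ^ q * Real.exp (-l)) (Set.Ioi γ) := by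
  have hdom : IntegrableOn (fun l : ℝ => l ^ ((k : ℝ) + 2 * q) * Real.exp (-l)) (Set.Ioi γ) := by
    have hs : (-1 : ℝ) < (k : ℝ) + 2 * q := by
      have : (0:ℝ) ≤ (k:ℝ) := Nat.cast_nonneg k; linarith
    have h := integrableOn_rpow_mul_exp_neg_mul_rpow
      (p := 1) (s := (k : ℝ) + 2 * q) (b := 1) hs one_pos one_pos
    have h2 : IntegrableOn (fun l : ℝ => l ^ ((k : ℝ) + 2 * q) * Real.exp (-l)) (Set.Ioi 0) := by
      refine h.congr_fun (fun x hx => ?_) measurableSet_Ioi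
      simp [Real.rpow_one, neg_mul, one_mul]
    exact h2.mono_set (Set.Ioi_subset_Ioi hγ.le)
  refine hdom.integrable.mono' ?_ ?_
  · exact (((continuous_pow k).mul (aux_cont γ q hq).2).mul
      (continuous_id.neg.rexp)).aestronglyMeasurable
  · filter_upwards [ae_restrict_mem measurableSet_Ioi] with l hl
    have hl0 : 0 < l := hγ.trans hl
    have hsub : 0 ≤ l ^ 2 - γ ^ 2 := by nlinarith [(mem_Ioi.mp hl).le]
    have h1 : (l ^ 2 - γ ^ 2) ^ q ≤ l ^ (2 * q) := by
      calc (l ^ 2 - γ ^ 2) ^ q ≤ (l ^ 2) ^ q :=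
            Real.rpow_le_rpow hsub (by nlinarith) hq
        _ = l ^ (2 * q) := by
            rw [← Real.rpow_natCast l 2, ← Real.rpow_mul hl0.le]
            norm_num
    rw [Real.norm_eq_abs, abs_mul, abs_mul, abs_of_nonneg (Real.exp_pos _).le,
      abs_of_nonneg (Real.rpow_nonneg hsub _), abs_of_nonneg (pow_nonneg hl0.le _)]
    rw [Real.rpow_add hl0, Real.rpow_natCast]
    have h2 := mul_le_mul_of_nonneg_left h1 (pow_nonneg hl0.le k)
    exact mul_le_mul_of_nonneg_right h2 (Real.exp_pos _).le

lemma aux_ibp (γ : ℝ) (hγ : 0 < γ) :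
    ∫ l in Set.Ioi γ, Real.exp (-l) * (l ^ 2 - γ ^ 2) ^ ((3:ℝ)/2) * l
      = (5:ℝ)⁻¹ * ∫ l in Set.Ioi γ, Real.exp (-l) * (l ^ 2 - γ ^ 2) ^ ((5:ℝ)/2) := by
  have h1 : IntegrableOn
      (fun l : ℝ => (5:ℝ)⁻¹ * (Real.exp (-l) * (l ^ 2 - γ ^ 2) ^ ((5:ℝ)/2))) (Set.Ioi γ) := by
    apply ((aux_int γ hγ 0 ((5:ℝ)/2) (by norm_num)).const_mul (5:ℝ)⁻¹).congr
    filter_upwards with x; ring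
  have h2 : IntegrableOn
      (fun l : ℝ => Real.exp (-l) * (l ^ 2 - γ ^ 2) ^ ((3:ℝ)/2) * l) (Set.Ioi γ) := by
    apply (aux_int γ hγ 1 ((3:ℝ)/2) (by norm_num)).congr
    filter_upwards with x; ring
  set F : ℝ → ℝ := fun l => -(5:ℝ)⁻¹ * (Real.exp (-l) * (l ^ 2 - γ ^ 2) ^ ((5:ℝ)/2)) with hF
  set f : ℝ → ℝ := fun l =>
    (5:ℝ)⁻¹ * (Real.exp (-l) * (l ^ 2 - γ ^ 2) ^ ((5:ℝ)/2))
      - Real.exp (-l) * (l ^ 2 - γ ^ 2) ^ ((3:ℝ)/2) * l with hf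
  have hderiv : ∀ l ∈ Set.Ioi γ, HasDerivAt F (f l) l := by
    intro l hl
    have hl0 : 0 < l := hγ.trans hl
    have hu : HasDerivAt (fun l : ℝ => l ^ 2 - γ ^ 2) (2 * l) l := by
      simpa using (hasDerivAt_pow 2 l).sub_const (γ ^ 2)
    have hne : l ^ 2 - γ ^ 2 ≠ 0 := by nlinarith [hl.out]
    have hr : HasDerivAt (fun l : ℝ => (l ^ 2 - γ ^ 2) ^ ((5:ℝ)/2))
        (2 * l * ((5:ℝ)/2) * (l ^ 2 - γ ^ 2) ^ ((5:ℝ)/2 - 1)) l :=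
      hu.rpow_const (Or.inl hne)
    have he : HasDerivAt (fun l : ℝ => Real.exp (-l)) (Real.exp (-l) * (-1)) l :=
      (hasDerivAt_neg l).exp
    have := (he.mul hr).const_mul (-(5:ℝ)⁻¹)
    have h52 : ((5:ℝ)/2 - 1) = (3:ℝ)/2 := by norm_num
    refine this.congr_deriv ?_
    rw [h52]; simp only [hf]; ring
  have f_int : IntegrableOn f (Set.Ioi γ) := h1.sub h2
  have htop : Filter.Tendsto F Filter.atTop (nhds 0) := by
    have hb : Filter.Tendsto (fun l : ℝ => (5:ℝ)⁻¹ * (l ^ (5:ℝ) * Real.exp (-1 * l)))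
        Filter.atTop (nhds 0) := by
      have := tendsto_rpow_mul_exp_neg_mul_atTop_nhds_zero (5:ℝ) 1 one_pos
      simpa using this.const_mul (5:ℝ)⁻¹
    refine squeeze_zero_norm' ?_ hb
    filter_upwards [Filter.eventually_gt_atTop (max γ 0)] with l hl
    have hl0 : 0 < l := lt_of_le_of_lt (le_max_right _ _) hl
    have hlγ : γ < l := lt_of_le_of_lt (le_max_left _ _) hl
    have hsub : 0 ≤ l ^ 2 - γ ^ 2 := by nlinarith
    have hle : (l ^ 2 - γ ^ 2) ^ ((5:ℝ)/2) ≤ l ^ (5:ℝ) := by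
      calc (l ^ 2 - γ ^ 2) ^ ((5:ℝ)/2) ≤ (l ^ 2) ^ ((5:ℝ)/2) :=
            Real.rpow_le_rpow hsub (by nlinarith) (by norm_num)
        _ = l ^ (5:ℝ) := by
            rw [← Real.rpow_natCast l 2, ← Real.rpow_mul hl0.le]; norm_num
    rw [hF]
    rw [Real.norm_eq_abs, abs_mul, abs_mul, abs_of_nonneg (Real.exp_pos _).le,
      abs_of_nonneg (Real.rpow_nonneg hsub _)]
    have habs : |(-(5:ℝ)⁻¹)| = (5:ℝ)⁻¹ := by norm_num
    rw [habs, neg_one_mul]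
    have hmul := mul_le_mul_of_nonneg_right hle (Real.exp_pos (-l)).le
    nlinarith [hmul, Real.exp_pos (-l)]
  have hcont : ContinuousWithinAt F (Set.Ici γ) γ := by
    apply Continuous.continuousWithinAt
    have hc1 : Continuous (fun l : ℝ => (l ^ 2 - γ ^ 2) ^ ((5:ℝ)/2)) :=
      (by continuity : Continuous (fun l : ℝ => l ^ 2 - γ ^ 2)).rpow_const
        (fun x => Or.inr (by norm_num))
    exact continuous_const.mul ((continuous_id.neg.rexp).mul hc1)
  have key := integral_Ioi_of_hasDerivAt_of_tendsto hcont hderiv f_int htop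
  have hFγ : F γ = 0 := by
    simp [hF, Real.zero_rpow (by norm_num : ((5:ℝ)/2) ≠ 0)]
  rw [hFγ, sub_zero] at key
  have split : (∫ l in Set.Ioi γ, f l)
      = (5:ℝ)⁻¹ * (∫ l in Set.Ioi γ, Real.exp (-l) * (l ^ 2 - γ ^ 2) ^ ((5:ℝ)/2))
        - ∫ l in Set.Ioi γ, Real.exp (-l) * (l ^ 2 - γ ^ 2) ^ ((3:ℝ)/2) * l := by
    rw [hf, integral_sub h1 h2, integral_const_mul]
  rw [split] at key
  linarith

lemma aux_subst (m c γ : ℝ) (hm : 0 < m) (hc : 0 < c) (hγ : 0 < γ) :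
    ∫ r in Set.Ioi (0:ℝ), r ^ 4 * Real.exp (-(γ * Real.sqrt (m^2*c^2 + r^2)) / (m*c))
      = (m*c/γ)^5 * ∫ l in Set.Ioi γ, Real.exp (-l) * (l^2 - γ^2) ^ ((3:ℝ)/2) * l := by
  have hmc : 0 < m * c := mul_pos hm hc
  set k : ℝ := m * c / γ with hk
  have hk0 : 0 < k := div_pos hmc hγ
  set φ : ℝ → ℝ := fun l => k * Real.sqrt (l ^ 2 - γ ^ 2) with hφ
  set φ' : ℝ → ℝ := fun l => k * l / Real.sqrt (l ^ 2 - γ ^ 2) with hφ'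
  have himg : φ '' Set.Ioi γ = Set.Ioi 0 := by
    apply Set.Subset.antisymm
    · rintro _ ⟨l, hl, rfl⟩
      have : 0 < l ^ 2 - γ ^ 2 := by nlinarith [hl.out, hγ]
      exact mul_pos hk0 (Real.sqrt_pos.2 this)
    · rintro r (hr : 0 < r)
      refine ⟨Real.sqrt (γ ^ 2 + (r / k) ^ 2), ?_, ?_⟩
      · have h1 : γ ^ 2 < γ ^ 2 + (r / k) ^ 2 := by
          have : 0 < (r / k) ^ 2 := by positivity
          linarith
        have := Real.sqrt_lt_sqrt (by positivity) h1
        rwa [Real.sqrt_sq hγ.le] at this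
      · have hge : (0:ℝ) ≤ γ ^ 2 + (r / k) ^ 2 := by positivity
        rw [hφ]
        simp only
        rw [Real.sq_sqrt hge]
        have : γ ^ 2 + (r / k) ^ 2 - γ ^ 2 = (r / k) ^ 2 := by ring
        rw [this, Real.sqrt_sq (by positivity)]
        field_simp
  have hderiv : ∀ l ∈ Set.Ioi γ, HasDerivWithinAt φ (φ' l) (Set.Ioi γ) l := by
    intro l hl
    have hpos : 0 < l ^ 2 - γ ^ 2 := by nlinarith [hl.out, hγ]
    have hu : HasDerivAt (fun l : ℝ => l ^ 2 - γ ^ 2) (2 * l) l := by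
      simpa using (hasDerivAt_pow 2 l).sub_const (γ ^ 2)
    have hs : HasDerivAt (fun l : ℝ => Real.sqrt (l ^ 2 - γ ^ 2))
        (2 * l / (2 * Real.sqrt (l ^ 2 - γ ^ 2))) l := by
      have := (Real.hasDerivAt_sqrt hpos.ne').comp l hu
      refine this.congr_deriv ?_
      ring
    have := (hs.const_mul k).hasDerivWithinAt (s := Set.Ioi γ)
    refine this.congr_deriv ?_
    rw [hφ']
    have hsq : 0 < Real.sqrt (l ^ 2 - γ ^ 2) := Real.sqrt_pos.2 hpos
    field_simp
  have hinj : Set.InjOn φ (Set.Ioi γ) := by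
    intro a ha b hb hab
    have ha2 : 0 < a ^ 2 - γ ^ 2 := by nlinarith [ha.out, hγ]
    have hb2 : 0 < b ^ 2 - γ ^ 2 := by nlinarith [hb.out, hγ]
    have h1 : Real.sqrt (a ^ 2 - γ ^ 2) = Real.sqrt (b ^ 2 - γ ^ 2) :=
      mul_left_cancel₀ hk0.ne' hab
    have h2 : a ^ 2 - γ ^ 2 = b ^ 2 - γ ^ 2 := by
      have := congrArg (fun x => x ^ 2) h1
      simpa [Real.sq_sqrt ha2.le, Real.sq_sqrt hb2.le] using this
    have ha0 : 0 < a := hγ.trans ha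
    have hb0 : 0 < b := hγ.trans hb
    nlinarith
  have key := MeasureTheory.integral_image_eq_integral_abs_deriv_smul measurableSet_Ioi hderiv hinj
    (fun r => r ^ 4 * Real.exp (-(γ * Real.sqrt (m^2*c^2 + r^2)) / (m*c)))
  rw [himg] at key
  rw [key, ← MeasureTheory.integral_const_mul]
  apply MeasureTheory.setIntegral_congr_fun measurableSet_Ioi
  intro l hl
  have hl0 : 0 < l := hγ.trans hl
  have hpos : 0 < l ^ 2 - γ ^ 2 := by nlinarith [hl.out, hγ]
  have hsq : 0 < Real.sqrt (l ^ 2 - γ ^ 2) := Real.sqrt_pos.2 hpos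
  have hφl : φ l = k * Real.sqrt (l ^ 2 - γ ^ 2) := rfl
  have hinner : m^2*c^2 + (φ l) ^ 2 = (k * l) ^ 2 := by
    rw [hφl, mul_pow, Real.sq_sqrt hpos.le, hk]
    field_simp
    ring
  have hexp : Real.sqrt (m^2*c^2 + (φ l) ^ 2) = k * l := by
    rw [hinner, Real.sqrt_sq (by positivity)]
  have habs : |φ' l| = k * l / Real.sqrt (l ^ 2 - γ ^ 2) := by
    rw [hφ']
    exact abs_of_pos (by positivity)
  have hr32 : (l ^ 2 - γ ^ 2) ^ ((3:ℝ)/2) = Real.sqrt (l ^ 2 - γ ^ 2) ^ 3 := by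
    rw [Real.sqrt_eq_rpow, ← Real.rpow_natCast ((l^2-γ^2) ^ ((1:ℝ)/2)) 3,
      ← Real.rpow_mul hpos.le]
    norm_num
  simp only [smul_eq_mul]
  rw [habs, hexp]
  have hexparg : -(γ * (k * l)) / (m * c) = -l := by
    rw [hk]; field_simp
  rw [hexparg, hr32, hφl]
  field_simp

lemma aux_g (a : ℝ) (ha : 0 < a) :
    Integrable (fun t : ℝ => (1 + t ^ 2) * Real.exp (-(a * |t|))) := by
  have hIoi : IntegrableOn (fun t : ℝ => (1 + t ^ 2) * Real.exp (-(a * |t|))) (Set.Ioi 0) := by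
    have h1 : IntegrableOn (fun x : ℝ => Real.exp (-a * x)) (Set.Ioi 0) :=
      exp_neg_integrableOn_Ioi 0 ha
    have h2 : IntegrableOn (fun x : ℝ => x ^ (2:ℝ) * Real.exp (-a * x ^ (1:ℝ))) (Set.Ioi 0) :=
      integrableOn_rpow_mul_exp_neg_mul_rpow (by norm_num) one_pos ha
    apply IntegrableOn.congr_fun (h1.add h2) _ measurableSet_Ioi
    intro x hx
    simp only [Pi.add_apply]
    have hx0 : 0 < x := hx
    simp only [abs_of_pos hx0, Real.rpow_one, neg_mul]
    rw [show (2:ℝ) = ((2:ℕ):ℝ) by norm_num, Real.rpow_natCast]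
    ring
  rw [← integrableOn_univ, ← @Set.Iio_union_Ici _ _ (0 : ℝ), integrableOn_union,
    integrableOn_Ici_iff_integrableOn_Ioi]
  refine ⟨?_, hIoi⟩
  rw [← (Measure.measurePreserving_neg (volume : Measure ℝ)).integrableOn_comp_preimage
      (Homeomorph.neg ℝ).measurableEmbedding]
  simp only [Function.comp_def, abs_neg, neg_sq, Set.neg_preimage, Set.neg_Iio, neg_neg, neg_zero]
  exact hIoi

lemma cont_dot3 : Continuous (fun p : Fin 3 → ℝ => dot3 p p) := by
  unfold dot3
  exact continuous_finset_sum _ (fun j _ => (continuous_apply j).mul (continuous_apply j))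

lemma cont_E (m c γ : ℝ) : Continuous (fun p : Fin 3 → ℝ =>
    Real.exp (-(γ * pZero m c p) / (m * c))) := by
  unfold pZero
  apply Real.continuous_exp.comp
  apply Continuous.div_const
  apply Continuous.neg
  exact continuous_const.mul (Real.continuous_sqrt.comp (continuous_const.add cont_dot3))

lemma pZero_ge (m c : ℝ) (hm : 0 < m) (hc : 0 < c) (p : Fin 3 → ℝ) :
    (∑ j, |p j|) ≤ Real.sqrt 3 * pZero m c p := by
  have hS : 0 ≤ dot3 p p := by
    unfold dot3
    exact Finset.sum_nonneg fun j _ => mul_self_nonneg _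
  have h1 : (∑ j, |p j|) ^ 2 ≤ 3 * dot3 p p := by
    have := sq_sum_le_card_mul_sum_sq (s := (Finset.univ : Finset (Fin 3)))
      (f := fun j => |p j|)
    simpa [dot3, sq_abs, Finset.card_univ, pow_two, mul_comm] using this
  have h2 : dot3 p p ≤ m ^ 2 * c ^ 2 + dot3 p p := by nlinarith
  have h3 : (∑ j, |p j|) ≤ Real.sqrt (3 * dot3 p p) := by
    rw [show (∑ j, |p j|) = Real.sqrt ((∑ j, |p j|) ^ 2) by
      rw [Real.sqrt_sq (Finset.sum_nonneg fun j _ => abs_nonneg _)]]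
    exact Real.sqrt_le_sqrt h1
  calc (∑ j, |p j|) ≤ Real.sqrt (3 * dot3 p p) := h3
    _ = Real.sqrt 3 * Real.sqrt (dot3 p p) := Real.sqrt_mul (by norm_num) _
    _ ≤ Real.sqrt 3 * pZero m c p := by
        apply mul_le_mul_of_nonneg_left _ (Real.sqrt_nonneg 3)
        exact Real.sqrt_le_sqrt h2

lemma aux_int3 (m c γ : ℝ) (hm : 0 < m) (hc : 0 < c) (hγ : 0 < γ) (i : Fin 3) :
    Integrable (fun p : Fin 3 → ℝ => (p i) ^ 2 * Real.exp (-(γ * pZero m c p) / (m * c))) := by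
  have hmc : 0 < m * c := mul_pos hm hc
  set a : ℝ := γ / (Real.sqrt 3 * (m * c)) with ha
  have hs3 : (0:ℝ) < Real.sqrt 3 := Real.sqrt_pos.2 (by norm_num)
  have ha0 : 0 < a := div_pos hγ (mul_pos hs3 hmc)
  have hprod : Integrable (fun p : Fin 3 → ℝ =>
      ∏ j, (1 + (p j) ^ 2) * Real.exp (-(a * |p j|))) :=
    Integrable.fintype_prod (f := fun _ t => (1 + t ^ 2) * Real.exp (-(a * |t|)))
      (fun _ => aux_g a ha0)
  refine hprod.mono' ?_ ?_
  · exact (((continuous_apply i).pow 2).mul (cont_E m c γ)).aestronglyMeasurable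
  · filter_upwards with p
    have hE : Real.exp (-(γ * pZero m c p) / (m * c)) ≤ Real.exp (-(a * ∑ j, |p j|)) := by
      apply Real.exp_le_exp.2
      rw [ha, neg_div, neg_le_neg_iff]
      rw [div_mul_eq_mul_div, div_le_div_iff₀ (mul_pos hs3 hmc) hmc]
      have h := pZero_ge m c hm hc p
      calc γ * (∑ j, |p j|) * (m * c) ≤ γ * (Real.sqrt 3 * pZero m c p) * (m * c) := by
            apply mul_le_mul_of_nonneg_right _ hmc.le
            exact mul_le_mul_of_nonneg_left h hγ.le
        _ = γ * pZero m c p * (Real.sqrt 3 * (m * c)) := by ring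
    have hsq : (p i) ^ 2 ≤ ∏ j, (1 + (p j) ^ 2) := by
      have hone : (1:ℝ) ≤ ∏ j ∈ Finset.univ.erase i, (1 + p j ^ 2) := by
        have := Finset.prod_le_prod (s := Finset.univ.erase i) (f := fun _ => (1:ℝ))
          (g := fun j => 1 + p j ^ 2) (by intros; norm_num)
          (by intro j _; nlinarith [sq_nonneg (p j)])
        simpa using this
      calc (p i) ^ 2 ≤ (1 + p i ^ 2) * 1 := by nlinarith
        _ ≤ (1 + p i ^ 2) * ∏ j ∈ Finset.univ.erase i, (1 + p j ^ 2) :=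
            mul_le_mul_of_nonneg_left hone (by nlinarith [sq_nonneg (p i)])
        _ = ∏ j, (1 + p j ^ 2) := Finset.mul_prod_erase Finset.univ (fun j => 1 + p j ^ 2) (Finset.mem_univ i)
    rw [Real.norm_eq_abs, abs_mul, abs_of_nonneg (Real.exp_pos _).le, abs_of_nonneg (sq_nonneg (p i))]
    calc (p i) ^ 2 * Real.exp (-(γ * pZero m c p) / (m * c))
        ≤ (∏ j, (1 + (p j) ^ 2)) * Real.exp (-(a * ∑ j, |p j|)) := by
          apply mul_le_mul hsq hE (Real.exp_pos _).le
          exact Finset.prod_nonneg fun j _ => by nlinarith [sq_nonneg (p j)]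
      _ = ∏ j, (1 + (p j) ^ 2) * Real.exp (-(a * |p j|)) := by
          rw [Finset.prod_mul_distrib]
          congr 1
          rw [← Real.exp_sum]
          congr 1
          rw [Finset.mul_sum]
          rw [Finset.sum_neg_distrib]

lemma aux_sym (m c γ : ℝ) (i : Fin 3) :
    ∫ p : Fin 3 → ℝ, (p i) ^ 2 * Real.exp (-(γ * pZero m c p) / (m * c))
      = ∫ p : Fin 3 → ℝ, (p 0) ^ 2 * Real.exp (-(γ * pZero m c p) / (m * c)) := by
  set e : Fin 3 ≃ Fin 3 := Equiv.swap i 0 with he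
  set σ := MeasurableEquiv.piCongrLeft (fun _ : Fin 3 => ℝ) e with hσdef
  have hmp : MeasurePreserving σ volume volume :=
    MeasureTheory.volume_measurePreserving_piCongrLeft (fun _ : Fin 3 => ℝ) e
  have hcoord : ∀ (x : Fin 3 → ℝ) (j : Fin 3), σ x j = x (e.symm j) := by
    intro x j
    conv_lhs => rw [show j = e (e.symm j) by simp]
    rw [hσdef, MeasurableEquiv.coe_piCongrLeft]
    exact Equiv.piCongrLeft_apply_apply (fun _ : Fin 3 => ℝ) e x (e.symm j)
  have key := hmp.integral_comp σ.measurableEmbedding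
    (fun p : Fin 3 → ℝ => (p i) ^ 2 * Real.exp (-(γ * pZero m c p) / (m * c)))
  rw [← key]
  apply integral_congr_ae
  filter_upwards with x
  have h1 : σ x i = x 0 := by
    rw [hcoord, he]
    simp
  have h2 : dot3 (σ x) (σ x) = dot3 x x := by
    unfold dot3
    rw [show (∑ j, σ x j * σ x j) = ∑ j, x (e.symm j) * x (e.symm j) by
      exact Finset.sum_congr rfl (fun j _ => by rw [hcoord])]
    exact Fintype.sum_equiv e.symm _ _ (fun j => rfl)
  simp only [pZero, h2, h1]

lemma ball_vol :
    (volume (Metric.ball (0 : EuclideanSpace ℝ (Fin 3)) 1)).toReal = 4 / 3 * Real.pi := by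
  have hΓ : Real.Gamma ((3:ℝ) / 2 + 1) = 3 / 4 * Real.sqrt Real.pi := by
    rw [Real.Gamma_add_one (by norm_num)]
    rw [show (3:ℝ)/2 = 1/2 + 1 by norm_num, Real.Gamma_add_one (by norm_num),
      Real.Gamma_one_half_eq]
    ring
  rw [EuclideanSpace.volume_ball]
  have hπ : 0 < Real.sqrt Real.pi := Real.sqrt_pos.2 Real.pi_pos
  rw [ENNReal.toReal_mul, ENNReal.toReal_pow, ENNReal.toReal_ofReal (by norm_num),
    ENNReal.toReal_ofReal (by positivity)]
  simp only [Fintype.card_fin, one_pow, one_mul]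
  rw [show ((3:ℕ):ℝ)/2 + 1 = (3:ℝ)/2 + 1 by norm_num, hΓ]
  rw [show Real.sqrt Real.pi ^ 3 = Real.pi * Real.sqrt Real.pi by
    rw [pow_succ, pow_two, Real.mul_self_sqrt Real.pi_pos.le]]
  field_simp

lemma aux_radial (m c γ : ℝ) :
    ∫ p : Fin 3 → ℝ, dot3 p p * Real.exp (-(γ * pZero m c p) / (m * c))
      = (4 * Real.pi) *
        ∫ r in Set.Ioi (0:ℝ), r ^ 4 * Real.exp (-(γ * Real.sqrt (m^2*c^2 + r^2)) / (m * c)) := by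
  set f : ℝ → ℝ := fun r => r ^ 2 * Real.exp (-(γ * Real.sqrt (m^2*c^2 + r^2)) / (m * c)) with hf
  have h1 : (∫ p : Fin 3 → ℝ, dot3 p p * Real.exp (-(γ * pZero m c p) / (m * c)))
      = ∫ x : EuclideanSpace ℝ (Fin 3), f ‖x‖ := by
    rw [← (EuclideanSpace.volume_preserving_symm_measurableEquiv_toLp (Fin 3)).integral_comp
      (MeasurableEquiv.measurableEmbedding _)
      (fun p : Fin 3 → ℝ => dot3 p p * Real.exp (-(γ * pZero m c p) / (m * c)))]
    apply integral_congr_ae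
    filter_upwards with x
    have hdot : dot3 ((MeasurableEquiv.toLp 2 (Fin 3 → ℝ)).symm x)
        ((MeasurableEquiv.toLp 2 (Fin 3 → ℝ)).symm x) = ‖x‖ ^ 2 := by
      rw [EuclideanSpace.norm_eq, Real.sq_sqrt (by positivity)]
      unfold dot3
      apply Finset.sum_congr rfl
      intro j _
      rw [Real.norm_eq_abs, pow_two, abs_mul_abs_self]
      rfl
    simp only [pZero, hdot, hf]
  rw [h1, MeasureTheory.integral_fun_norm_addHaar (volume : Measure (EuclideanSpace ℝ (Fin 3))) f]
  have hcongr : (∫ y in Set.Ioi (0:ℝ), y ^ (2:ℕ) * f y)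
      = ∫ r in Set.Ioi (0:ℝ), r ^ 4 * Real.exp (-(γ * Real.sqrt (m^2*c^2 + r^2)) / (m * c)) := by
    apply MeasureTheory.setIntegral_congr_fun measurableSet_Ioi
    intro y hy
    simp only [hf]
    ring
  simp only [finrank_euclideanSpace_fin, measureReal_def, ball_vol, nsmul_eq_mul, smul_eq_mul, Nat.cast_ofNat]
  rw [show (3:ℕ) - 1 = 2 from rfl, hcongr]
  ring

lemma Kint_pos (γ : ℝ) (hγ : 0 < γ) :
    0 < ∫ l in Set.Ioi γ, Real.exp (-l) * (l ^ 2 - γ ^ 2) ^ ((3:ℝ)/2) := by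
  have hint : IntegrableOn (fun l : ℝ => Real.exp (-l) * (l ^ 2 - γ ^ 2) ^ ((3:ℝ)/2))
      (Set.Ioi γ) := by
    apply (aux_int γ hγ 0 ((3:ℝ)/2) (by norm_num)).congr
    filter_upwards with x; ring
  have hnn : 0 ≤ᵐ[volume.restrict (Set.Ioi γ)]
      (fun l : ℝ => Real.exp (-l) * (l ^ 2 - γ ^ 2) ^ ((3:ℝ)/2)) := by
    filter_upwards [ae_restrict_mem measurableSet_Ioi] with l hl
    have : 0 ≤ l ^ 2 - γ ^ 2 := by nlinarith [hl.out, hγ]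
    positivity
  rw [MeasureTheory.setIntegral_pos_iff_support_of_nonneg_ae hnn hint]
  have hsub : Set.Ioi γ ⊆ Function.support
      (fun l : ℝ => Real.exp (-l) * (l ^ 2 - γ ^ 2) ^ ((3:ℝ)/2)) ∪ (Set.Ioi γ)ᶜ := by
    intro l hl
    left
    have h1 : 0 < l ^ 2 - γ ^ 2 := by nlinarith [hl.out, hγ]
    simp only [Function.mem_support]
    positivity
  have : (Function.support (fun l : ℝ => Real.exp (-l) * (l ^ 2 - γ ^ 2) ^ ((3:ℝ)/2))
      ∩ Set.Ioi γ) = Set.Ioi γ := by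
    apply Set.Subset.antisymm Set.inter_subset_right
    intro l hl
    refine ⟨?_, hl⟩
    have h1 : 0 < l ^ 2 - γ ^ 2 := by nlinarith [hl.out, hγ]
    simp only [Function.mem_support]
    positivity
  rw [this]
  simp [hγ]

lemma Kb_eq (γ : ℝ) (hγ : 0 < γ) :
    Kbessel 2 γ = 1/3 * (γ ^ 2)⁻¹ * ∫ l in Set.Ioi γ,
        Real.exp (-l) * (l ^ 2 - γ ^ 2) ^ ((3:ℝ)/2) := by
  unfold Kbessel
  rw [show ((2:ℕ):ℝ) - 1/2 = (3:ℝ)/2 by norm_num]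
  rw [zpow_neg, zpow_natCast]
  norm_num [Nat.factorial]

lemma Kb3_eq (γ : ℝ) (hγ : 0 < γ) :
    Kbessel 3 γ = 1/15 * (γ ^ 3)⁻¹ * ∫ l in Set.Ioi γ,
        Real.exp (-l) * (l ^ 2 - γ ^ 2) ^ ((5:ℝ)/2) := by
  unfold Kbessel
  rw [show ((3:ℕ):ℝ) - 1/2 = (5:ℝ)/2 by norm_num]
  rw [zpow_neg, zpow_natCast]
  norm_num [Nat.factorial]

/-- For each `i ∈ {1,2,3}`, `c ∫_{ℝ³} p_i² J(p) dp = n₀m²c³K₃(γ)/(γK₂(γ))`. -/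
theorem stmt10 (m c n₀ γ : ℝ) (hm : 0 < m) (hc : 0 < c) (hn : 0 < n₀) (hγ : 0 < γ)
    (i : Fin 3) :
    c * ∫ p : Fin 3 → ℝ, (p i) ^ 2 * Juttner m c n₀ γ p
      = n₀ * m ^ 2 * c ^ 3 * Kbessel 3 γ / (γ * Kbessel 2 γ) := by
  have hmc : 0 < m * c := mul_pos hm hc
  have hK2pos : 0 < Kbessel 2 γ := by
    rw [Kb_eq γ hγ]
    have h := Kint_pos γ hγ
    positivity
  have hsum : (∫ p : Fin 3 → ℝ, dot3 p p * Real.exp (-(γ * pZero m c p) / (m * c)))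
      = ∑ j : Fin 3, ∫ p : Fin 3 → ℝ, (p j) ^ 2 * Real.exp (-(γ * pZero m c p) / (m * c)) := by
    rw [← MeasureTheory.integral_finset_sum Finset.univ
      (fun j _ => aux_int3 m c γ hm hc hγ j)]
    apply integral_congr_ae
    filter_upwards with p
    unfold dot3
    rw [← Finset.sum_mul]
    congr 1
    exact Finset.sum_congr rfl (fun j _ => by rw [pow_two])
  have h3 : (3:ℝ) * (∫ p : Fin 3 → ℝ, (p 0) ^ 2 * Real.exp (-(γ * pZero m c p) / (m * c)))
      = ∫ p : Fin 3 → ℝ, dot3 p p * Real.exp (-(γ * pZero m c p) / (m * c)) := by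
    rw [hsum, Fin.sum_univ_three, aux_sym m c γ 1, aux_sym m c γ 2]
    ring
  have hVi : (∫ p : Fin 3 → ℝ, (p i) ^ 2 * Real.exp (-(γ * pZero m c p) / (m * c)))
      = 4 * Real.pi * (m * c / γ) ^ 5 *
          ((5:ℝ)⁻¹ * ∫ l in Set.Ioi γ, Real.exp (-l) * (l ^ 2 - γ ^ 2) ^ ((5:ℝ)/2)) / 3 := by
    rw [aux_sym m c γ i]
    have h4 : (∫ p : Fin 3 → ℝ, dot3 p p * Real.exp (-(γ * pZero m c p) / (m * c)))
        = 4 * Real.pi * ((m * c / γ) ^ 5 *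
            ((5:ℝ)⁻¹ * ∫ l in Set.Ioi γ, Real.exp (-l) * (l ^ 2 - γ ^ 2) ^ ((5:ℝ)/2))) := by
      rw [aux_radial m c γ, aux_subst m c γ hm hc hγ, aux_ibp γ hγ]
    linarith [h3, h4]
  have hJ : (∫ p : Fin 3 → ℝ, (p i) ^ 2 * Juttner m c n₀ γ p)
      = (n₀ * γ / (4 * Real.pi * m ^ 3 * c ^ 3 * Kbessel 2 γ)) *
          ∫ p : Fin 3 → ℝ, (p i) ^ 2 * Real.exp (-(γ * pZero m c p) / (m * c)) := by
    rw [← MeasureTheory.integral_const_mul]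
    apply integral_congr_ae
    filter_upwards with p
    unfold Juttner
    ring
  have hI5K : (∫ l in Set.Ioi γ, Real.exp (-l) * (l ^ 2 - γ ^ 2) ^ ((5:ℝ)/2))
      = 15 * γ ^ 3 * Kbessel 3 γ := by
    rw [Kb3_eq γ hγ]
    field_simp
  rw [hJ, hVi, hI5K]
  have hπ : Real.pi ≠ 0 := Real.pi_ne_zero
  field_simp
  ring
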